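/- Let p > 1 and 1/p + 1/q = 1, and let A, B be positive definite n×n complex matrices. Then for every vector x ∈ C^n: ⟨x, (B^q ♯_{1/p} A^p) x⟩ ≤ ⟨x, B^q x⟩^{1−1/p} · ⟨x, A^p x⟩^{1/p}. -/

import Mathlib

open Matrix
open scoped ComplexOrder

/-- Square root of a (Hermitian positive semidefinite) matrix via the
continuous functional calculus. -/
noncomputable def msqrt {n : Type*} [Fintype n] [DecidableEq n]
    (M : Matrix n n ℂ) : Matrix n n ℂ :=
  cfc Real.sqrt M

/-- Real power of a (Hermitian positive semidefinite) matrix via the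
continuous functional calculus. -/
noncomputable def mpow {n : Type*} [Fintype n] [DecidableEq n]
    (M : Matrix n n ℂ) (t : ℝ) : Matrix n n ℂ :=
  cfc (fun x : ℝ => x ^ t) M

/-- Continuous function applied to a Hermitian matrix via functional calculus. -/
noncomputable def mfun {n : Type*} [Fintype n] [DecidableEq n]
    (f : ℝ → ℝ) (M : Matrix n n ℂ) : Matrix n n ℂ :=
  cfc f M

/-- The absolute value `|M| = (Mᴴ M)^{1/2}` of a matrix. -/
noncomputable def matAbs {n : Type*} [Fintype n] [DecidableEq n]
    (M : Matrix n n ℂ) : Matrix n n ℂ :=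
  msqrt (Mᴴ * M)

/-- The absolute value `|Mᴴ| = (M Mᴴ)^{1/2}` of the adjoint of a matrix. -/
noncomputable def matAbsStar {n : Type*} [Fintype n] [DecidableEq n]
    (M : Matrix n n ℂ) : Matrix n n ℂ :=
  msqrt (M * Mᴴ)

/-- Trace norm (sum of singular values) of a matrix. -/
noncomputable def trNorm {n : Type*} [Fintype n] [DecidableEq n]
    (M : Matrix n n ℂ) : ℝ :=
  ((matAbs M).trace).re

/-- Operator norm of a matrix acting on Euclidean space. -/
noncomputable def opNorm {n : Type*} [Fintype n] [DecidableEq n]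
    (M : Matrix n n ℂ) : ℝ :=
  ‖Matrix.toEuclideanCLM (𝕜 := ℂ) M‖

/-- Frobenius (Hilbert-Schmidt) norm of a matrix. -/
noncomputable def frobNorm {n : Type*} [Fintype n] [DecidableEq n]
    (M : Matrix n n ℂ) : ℝ :=
  Real.sqrt ((Mᴴ * M).trace).re

/-- Geometric mean `A♯B = A^{1/2}(A^{-1/2} B A^{-1/2})^{1/2} A^{1/2}`
of (positive definite) matrices. -/
noncomputable def geom {n : Type*} [Fintype n] [DecidableEq n]
    (A B : Matrix n n ℂ) : Matrix n n ℂ :=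
  msqrt A * msqrt ((msqrt A)⁻¹ * B * (msqrt A)⁻¹) * msqrt A

/-- Weighted geometric mean `A♯_θB = A^{1/2}(A^{-1/2} B A^{-1/2})^θ A^{1/2}`. -/
noncomputable def geomW {n : Type*} [Fintype n] [DecidableEq n]
    (A B : Matrix n n ℂ) (θ : ℝ) : Matrix n n ℂ :=
  msqrt A * mpow ((msqrt A)⁻¹ * B * (msqrt A)⁻¹) θ * msqrt A

section Aux
variable {n : Type*} [Fintype n] [DecidableEq n]

lemma contOn_spectrum (f : ℝ → ℝ) (A : Matrix n n ℂ) :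
    ContinuousOn f (spectrum ℝ A) := by
  rw [continuousOn_iff_continuous_restrict]
  fun_prop

lemma posSemidef_cfc' {A : Matrix n n ℂ} (hA : A.IsHermitian) (f : ℝ → ℝ)
    (hf : ∀ i, 0 ≤ f (hA.eigenvalues i)) : (cfc f A).PosSemidef := by
  rw [hA.cfc_eq, Matrix.IsHermitian.cfc]
  have hd : (Matrix.diagonal (RCLike.ofReal ∘ f ∘ hA.eigenvalues) : Matrix n n ℂ).PosSemidef :=
    Matrix.PosSemidef.diagonal (fun i => by
      simpa using Complex.zero_le_real.mpr (hf i))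
  simpa [Matrix.star_eq_conjTranspose] using
    hd.mul_mul_conjTranspose_same (hA.eigenvectorUnitary : Matrix n n ℂ)

lemma posDef_of_posSemidef_isUnit {A : Matrix n n ℂ} (h1 : A.PosSemidef) (h2 : IsUnit A) :
    A.PosDef := by
  refine posDef_iff_dotProduct_mulVec.mpr ⟨h1.1, fun x hx => lt_of_le_of_ne (h1.dotProduct_mulVec_nonneg x) fun h => hx ?_⟩
  have h0 := (h1.dotProduct_mulVec_zero_iff x).mp h.symm
  have hinj := Matrix.mulVec_injective_iff_isUnit.mpr h2
  have : A *ᵥ x = A *ᵥ 0 := by simpa using h0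
  simpa using hinj this

lemma mem_spectrum_of_herm {A : Matrix n n ℂ} (hA : A.IsHermitian) {t : ℝ}
    (ht : t ∈ spectrum ℝ A) : ∃ i, hA.eigenvalues i = t := by
  rw [hA.spectrum_real_eq_range_eigenvalues] at ht
  exact ht

lemma isUnit_cfc_aux {A : Matrix n n ℂ} (hA : A.IsHermitian) (f : ℝ → ℝ)
    (hf : ∀ t ∈ spectrum ℝ A, f t ≠ 0) : IsUnit (cfc f A) := by
  have h1 : cfc f A * cfc (fun t => (f t)⁻¹) A = 1 := by
    rw [← cfc_mul f _ A (contOn_spectrum f A) (contOn_spectrum _ A)]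
    rw [cfc_congr (g := fun _ => (1:ℝ)) (fun t ht => by
      simp [mul_inv_cancel₀ (hf t ht)]), cfc_const_one ℝ A]
  have h2 : cfc (fun t => (f t)⁻¹) A * cfc f A = 1 := by
    rw [← cfc_mul _ f A (contOn_spectrum _ A) (contOn_spectrum f A)]
    rw [cfc_congr (g := fun _ => (1:ℝ)) (fun t ht => by
      simp [inv_mul_cancel₀ (hf t ht)]), cfc_const_one ℝ A]
  exact ⟨⟨_, _, h1, h2⟩, rfl⟩

lemma posDef_cfc' {A : Matrix n n ℂ} (hA : A.IsHermitian) (f : ℝ → ℝ)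
    (hf : ∀ i, 0 < f (hA.eigenvalues i)) : (cfc f A).PosDef := by
  refine posDef_of_posSemidef_isUnit (posSemidef_cfc' hA f fun i => (hf i).le) ?_
  refine isUnit_cfc_aux hA f fun t ht => ?_
  obtain ⟨i, rfl⟩ := mem_spectrum_of_herm hA ht
  exact (hf i).ne'

lemma msqrt_posDef {A : Matrix n n ℂ} (hA : A.PosDef) : (msqrt A).PosDef :=
  posDef_cfc' hA.1 _ fun i => Real.sqrt_pos.mpr (hA.eigenvalues_pos i)

lemma msqrt_mul_msqrt {A : Matrix n n ℂ} (hA : A.PosDef) : msqrt A * msqrt A = A := by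
  unfold msqrt
  rw [← cfc_mul _ _ A (contOn_spectrum _ A) (contOn_spectrum _ A)]
  rw [cfc_congr (g := fun t : ℝ => t) (fun t ht => ?_)]
  · exact cfc_id' ℝ A hA.1
  · obtain ⟨i, rfl⟩ := mem_spectrum_of_herm hA.1 ht
    exact Real.mul_self_sqrt (hA.eigenvalues_pos i).le

lemma mpow_posDef {A : Matrix n n ℂ} (hA : A.PosDef) (t : ℝ) : (mpow A t).PosDef :=
  posDef_cfc' hA.1 _ fun i => Real.rpow_pos_of_pos (hA.eigenvalues_pos i) t

end Aux

section Main
variable {n : Type*} [Fintype n] [DecidableEq n]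

lemma posDef_conj {A B : Matrix n n ℂ} (hA : A.PosDef) (hB : IsUnit B) :
    (Bᴴ * A * B).PosDef := by
  refine posDef_iff_dotProduct_mulVec.mpr ⟨Matrix.isHermitian_conjTranspose_mul_mul B hA.1, fun x hx => ?_⟩
  have key : star x ⬝ᵥ (Bᴴ * A * B) *ᵥ x = star (B *ᵥ x) ⬝ᵥ A *ᵥ (B *ᵥ x) := by
    rw [← Matrix.mulVec_mulVec, ← Matrix.mulVec_mulVec, Matrix.dotProduct_mulVec,
      Matrix.vecMul_conjTranspose, star_star]
  rw [key]
  refine hA.dotProduct_mulVec_pos (x := B *ᵥ x) fun h => hx ?_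
  have hinj := Matrix.mulVec_injective_iff_isUnit.mpr hB
  simpa using hinj (show B *ᵥ x = B *ᵥ 0 by simpa using h)

lemma young_scalar {θ l u : ℝ} (hθ0 : 0 < θ) (hθ1 : θ < 1) (hl : 0 < l) (hu : 0 < u) :
    u ^ θ ≤ (1-θ)*l^θ + θ*l^(θ-1)*u := by
  have h := Real.geom_mean_le_arith_mean2_weighted
    (by linarith : (0:ℝ) ≤ 1-θ) hθ0.le hl.le hu.le (by ring)
  have hpos : 0 < l ^ (θ-1) := Real.rpow_pos_of_pos hl _
  have h2 := mul_le_mul_of_nonneg_left h hpos.le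
  have h3 : l ^ (θ-1) * l = l ^ θ := by
    nth_rewrite 2 [← Real.rpow_one l]
    rw [← Real.rpow_add hl]; norm_num
  have h4 : l ^ (θ-1) * l ^ (1-θ) = 1 := by
    rw [← Real.rpow_add hl]; norm_num
  calc u ^ θ = l ^ (θ-1) * (l ^ (1-θ) * u ^ θ) := by rw [← mul_assoc, h4, one_mul]
    _ ≤ l ^ (θ-1) * ((1-θ)*l + θ*u) := h2
    _ = (1-θ)*(l^(θ-1)*l) + θ*l^(θ-1)*u := by ring
    _ = (1-θ)*l^θ + θ*l^(θ-1)*u := by rw [h3]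

end Main

/-- Pointwise form of Theorem S2: `⟨x, (B^q ♯_{1/p} A^p) x⟩ ≤ ⟨x, B^q x⟩^{1-1/p} ⟨x, A^p x⟩^{1/p}`. -/
theorem weighted_geom_inner_le {n : Type*} [Fintype n] [DecidableEq n]
    (A B : Matrix n n ℂ) (hA : A.PosDef) (hB : B.PosDef)
    (p q : ℝ) (hp : 1 < p) (hpq : 1 / p + 1 / q = 1)
    (x : n → ℂ) :
    (dotProduct (star x) ((geomW (mpow B q) (mpow A p) (1 / p)) *ᵥ x)).re ≤
      (dotProduct (star x) ((mpow B q) *ᵥ x)).re ^ (1 - 1 / p) *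
        (dotProduct (star x) ((mpow A p) *ᵥ x)).re ^ (1 / p) := by
  have hp0 : 0 < p := lt_trans one_pos hp
  set θ : ℝ := 1 / p with hθdef
  have hθ0 : 0 < θ := by positivity
  have hθ1 : θ < 1 := by
    rw [hθdef, div_lt_one hp0]; exact hp
  set C : Matrix n n ℂ := mpow B q with hCdef
  set D : Matrix n n ℂ := mpow A p with hDdef
  have hC : C.PosDef := mpow_posDef hB q
  have hD : D.PosDef := mpow_posDef hA p
  set S : Matrix n n ℂ := msqrt C with hSdef
  have hS : S.PosDef := msqrt_posDef hC
  have hSH : Sᴴ = S := hS.1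
  have hSdet : IsUnit S.det := Matrix.isUnit_iff_isUnit_det S |>.mp hS.isUnit
  have hSS : S * S⁻¹ = 1 := Matrix.mul_nonsing_inv S hSdet
  have hSS' : S⁻¹ * S = 1 := Matrix.nonsing_inv_mul S hSdet
  set X : Matrix n n ℂ := S⁻¹ * D * S⁻¹ with hXdef
  have hX : X.PosDef := by
    have h1 : ((S⁻¹)ᴴ * D * S⁻¹).PosDef := posDef_conj hD hS.inv.isUnit
    rwa [Matrix.conjTranspose_nonsing_inv, hSH] at h1
  have hSXS : S * X * S = D := by
    calc S * (S⁻¹ * D * S⁻¹) * S = (S * S⁻¹) * (D * (S⁻¹ * S)) := by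
          simp only [Matrix.mul_assoc]
      _ = D := by rw [hSS, hSS', Matrix.mul_one, Matrix.one_mul]
  have hGeom : geomW C D θ = S * mpow X θ * S := rfl
  set s : ℝ := (dotProduct (star x) (C *ᵥ x)).re with hsdef
  set t : ℝ := (dotProduct (star x) (D *ᵥ x)).re with htdef
  -- key family of inequalities
  have main : ∀ l : ℝ, 0 < l →
      (dotProduct (star x) ((geomW C D θ) *ᵥ x)).re ≤
        ((1-θ)*l^θ) * s + (θ*l^(θ-1)) * t := by
    intro l hl
    set a : ℝ := (1-θ)*l^θ with hadef
    set b : ℝ := θ*l^(θ-1) with hbdef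
    have hE : (cfc (fun u : ℝ => a + b*u - u^θ) X).PosSemidef := by
      refine posSemidef_cfc' hX.1 _ fun i => ?_
      have := young_scalar hθ0 hθ1 hl (hX.eigenvalues_pos i)
      simp only [hadef, hbdef]
      nlinarith [this]
    have hEeq : cfc (fun u : ℝ => a + b*u - u^θ) X
        = (a • (1 : Matrix n n ℂ) + b • X) - mpow X θ := by
      rw [cfc_sub (fun u : ℝ => a + b*u) (fun u : ℝ => u^θ) X
        (contOn_spectrum _ X) (contOn_spectrum _ X)]
      rw [cfc_add X (fun _ : ℝ => a) (fun u : ℝ => b*u)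
        (contOn_spectrum _ X) (contOn_spectrum _ X)]
      have h3 := cfc_const a X hX.1
      have h4 := cfc_const_mul_id b X hX.1
      rw [h3, h4, Algebra.algebraMap_eq_smul_one]
      rfl
    have hkey : ((a • C + b • D) - geomW C D θ).PosSemidef := by
      have h2 := hE.mul_mul_conjTranspose_same S
      rw [hSH, hEeq] at h2
      have h3 : S * ((a • (1 : Matrix n n ℂ) + b • X) - mpow X θ) * S
          = (a • C + b • D) - geomW C D θ := by
        rw [Matrix.mul_sub, Matrix.sub_mul, Matrix.mul_add, Matrix.add_mul]
        rw [Matrix.mul_smul, Matrix.smul_mul, Matrix.mul_smul, Matrix.smul_mul]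
        rw [Matrix.mul_one, msqrt_mul_msqrt hC, hSXS, hGeom]
      rwa [h3] at h2
    have h0 := hkey.dotProduct_mulVec_nonneg x
    have h0re : 0 ≤ (dotProduct (star x) (((a • C + b • D) - geomW C D θ) *ᵥ x)).re := by
      exact_mod_cast (Complex.le_def.mp h0).1
    have hexp : (dotProduct (star x) (((a • C + b • D) - geomW C D θ) *ᵥ x)).re
        = a * s + b * t - (dotProduct (star x) ((geomW C D θ) *ᵥ x)).re := by
      simp only [Matrix.sub_mulVec, Matrix.add_mulVec, Matrix.smul_mulVec,
        dotProduct_sub, dotProduct_add, dotProduct_smul, Complex.sub_re, Complex.add_re,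
        Complex.real_smul, Complex.mul_re, Complex.ofReal_re, Complex.ofReal_im]
      simp [hsdef, htdef]
    rw [hexp] at h0re
    linarith
  -- conclude
  show (dotProduct (star x) ((geomW C D θ) *ᵥ x)).re ≤ s ^ (1-θ) * t ^ θ
  by_cases hx : x = 0
  · subst hx
    have hs0 : s = 0 := by simp [hsdef]
    have ht0 : t = 0 := by simp [htdef]
    rw [hs0, ht0, Real.zero_rpow (ne_of_gt (show (0:ℝ) < 1-θ by linarith))]
    simp
  · have hs : 0 < s := by
      have := hC.re_dotProduct_pos (x := x) hx
      simpa using this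
    have ht : 0 < t := by
      have := hD.re_dotProduct_pos (x := x) hx
      simpa using this
    have hl : 0 < t / s := div_pos ht hs
    have h := main (t/s) hl
    have hsne : s ≠ 0 := hs.ne'
    have hsθ : (0:ℝ) < s ^ θ := Real.rpow_pos_of_pos hs θ
    have htθ : (0:ℝ) < t ^ θ := Real.rpow_pos_of_pos ht θ
    have hsplit : s ^ ((1:ℝ)-θ) = s / s^θ := by rw [Real.rpow_sub hs, Real.rpow_one]
    have h5 : t ^ (θ-1) = t^θ / t := by rw [Real.rpow_sub ht, Real.rpow_one]
    have h6 : s ^ (θ-1) = s^θ / s := by rw [Real.rpow_sub hs, Real.rpow_one]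
    have P : (t/s)^θ * s = s^(1-θ) * t^θ := by
      rw [Real.div_rpow ht.le hs.le, hsplit]
      field_simp
    have Q : (t/s)^(θ-1) * t = s^(1-θ) * t^θ := by
      rw [Real.div_rpow ht.le hs.le, hsplit, h5, h6]
      field_simp
    calc (dotProduct (star x) ((geomW C D θ) *ᵥ x)).re
        ≤ ((1-θ)*(t/s)^θ) * s + (θ*(t/s)^(θ-1)) * t := h
      _ = (1-θ) * ((t/s)^θ * s) + θ * ((t/s)^(θ-1) * t) := by ring
      _ = s^(1-θ) * t^θ := by rw [P, Q]; ring
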